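/- Let m > 3 be an integer and n, p > 0. Define α(k) = -4m(m-3)(n+p)·k^{3m+2} + 4(m+1)((m-1)p + 2mn)·k^{3m} - 4(3m-1)(mn+p)·k^{2m+3} + 4(3m-1)(mn-p)·k^m + 4(m+1)((m-1)p - 2mn)·k³ - 4m(m-3)(p-n)·k. Then α(1) = α'(1) = α''(1) = 0 and α'''(1) = 8mn(3m-1)(m-3)(m-1)(m+1) > 0, and α(k) → -∞ as k → ∞; hence there exists k̃ > 1 with α(k) > 0 on (1, k̃) and α(k̃) = 0. -/

import Mathlib

open Set Filter Topology

private lemma hasDerivAt7 (a b c d e f g : ℝ) (A B C D E F : ℕ) (x : ℝ) :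
    HasDerivAt (fun k : ℝ => a*k^(A+1) + b*k^(B+1) + c*k^(C+1) + d*k^(D+1)
        + e*k^(E+1) + f*k^(F+1) + g)
      (a*((A:ℝ)+1)*x^A + b*((B:ℝ)+1)*x^B + c*((C:ℝ)+1)*x^C + d*((D:ℝ)+1)*x^D
        + e*((E:ℝ)+1)*x^E + f*((F:ℝ)+1)*x^F) x := by
  have t : ∀ (a : ℝ) (A : ℕ), HasDerivAt (fun k : ℝ => a * k^(A+1)) (a*((A:ℝ)+1)*x^A) x := by
    intro a A
    have h := (hasDerivAt_pow (A+1) x).const_mul a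
    have : (a * (↑(A + 1) * x ^ (A + 1 - 1))) = a*((A:ℝ)+1)*x^A := by
      push_cast [Nat.add_sub_cancel]; ring
    rwa [this] at h
  exact ((((((t a A).add (t b B)).add (t c C)).add (t d D)).add (t e E)).add (t f F)).add_const g

private noncomputable def coA (q : ℕ) (n p : ℝ) : ℝ := -4*((q:ℝ)+4)*((q:ℝ)+1)*(n+p)
private noncomputable def coB (q : ℕ) (n p : ℝ) : ℝ :=
  4*((q:ℝ)+5)*(((q:ℝ)+3)*p + 2*((q:ℝ)+4)*n)
private noncomputable def coC (q : ℕ) (n p : ℝ) : ℝ := -4*(3*(q:ℝ)+11)*(((q:ℝ)+4)*n + p)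
private noncomputable def coD (q : ℕ) (n p : ℝ) : ℝ := 4*(3*(q:ℝ)+11)*(((q:ℝ)+4)*n - p)
private noncomputable def coE (q : ℕ) (n p : ℝ) : ℝ :=
  4*((q:ℝ)+5)*(((q:ℝ)+3)*p - 2*((q:ℝ)+4)*n)
private noncomputable def coF (q : ℕ) (n p : ℝ) : ℝ := -4*((q:ℝ)+4)*((q:ℝ)+1)*(p-n)

private noncomputable def A0 (q : ℕ) (n p : ℝ) : ℝ → ℝ := fun x =>
  coA q n p * x^(3*q+14) + coB q n p * x^(3*q+12) + coC q n p * x^(2*q+11)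
  + coD q n p * x^(q+4) + coE q n p * x^3 + coF q n p * x

private noncomputable def A1 (q : ℕ) (n p : ℝ) : ℝ → ℝ := fun x =>
  coA q n p * (3*(q:ℝ)+14) * x^(3*q+13) + coB q n p * (3*(q:ℝ)+12) * x^(3*q+11)
  + coC q n p * (2*(q:ℝ)+11) * x^(2*q+10) + coD q n p * ((q:ℝ)+4) * x^(q+3)
  + coE q n p * 3 * x^2 + coF q n p

private noncomputable def A2 (q : ℕ) (n p : ℝ) : ℝ → ℝ := fun x =>
  coA q n p * (3*(q:ℝ)+14) * (3*(q:ℝ)+13) * x^(3*q+12)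
  + coB q n p * (3*(q:ℝ)+12) * (3*(q:ℝ)+11) * x^(3*q+10)
  + coC q n p * (2*(q:ℝ)+11) * (2*(q:ℝ)+10) * x^(2*q+9)
  + coD q n p * ((q:ℝ)+4) * ((q:ℝ)+3) * x^(q+2)
  + coE q n p * 6 * x

private noncomputable def A3 (q : ℕ) (n p : ℝ) : ℝ → ℝ := fun x =>
  coA q n p * (3*(q:ℝ)+14) * (3*(q:ℝ)+13) * (3*(q:ℝ)+12) * x^(3*q+11)
  + coB q n p * (3*(q:ℝ)+12) * (3*(q:ℝ)+11) * (3*(q:ℝ)+10) * x^(3*q+9)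
  + coC q n p * (2*(q:ℝ)+11) * (2*(q:ℝ)+10) * (2*(q:ℝ)+9) * x^(2*q+8)
  + coD q n p * ((q:ℝ)+4) * ((q:ℝ)+3) * ((q:ℝ)+2) * x^(q+1)
  + coE q n p * 6

private lemma hasDerivAtA0 (q : ℕ) (n p : ℝ) (x : ℝ) :
    HasDerivAt (A0 q n p) (A1 q n p x) x := by
  have hfun : A0 q n p = (fun k : ℝ => coA q n p * k^(3*q+13+1) + coB q n p * k^(3*q+11+1)
      + coC q n p * k^(2*q+10+1) + coD q n p * k^(q+3+1) + coE q n p * k^(2+1)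
      + coF q n p * k^(0+1) + 0) := by
    funext k; simp only [A0]; ring
  rw [hfun]
  convert hasDerivAt7 (coA q n p) (coB q n p) (coC q n p) (coD q n p) (coE q n p) (coF q n p)
    0 (3*q+13) (3*q+11) (2*q+10) (q+3) 2 0 x using 1
  simp only [A1]; push_cast; ring

private lemma hasDerivAtA1 (q : ℕ) (n p : ℝ) (x : ℝ) :
    HasDerivAt (A1 q n p) (A2 q n p x) x := by
  have hfun : A1 q n p = (fun k : ℝ => (coA q n p * (3*(q:ℝ)+14)) * k^(3*q+12+1)
      + (coB q n p * (3*(q:ℝ)+12)) * k^(3*q+10+1)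
      + (coC q n p * (2*(q:ℝ)+11)) * k^(2*q+9+1)
      + (coD q n p * ((q:ℝ)+4)) * k^(q+2+1)
      + (coE q n p * 3) * k^(1+1) + 0 * k^(0+1) + coF q n p) := by
    funext k; simp only [A1]; ring
  rw [hfun]
  convert hasDerivAt7 _ _ _ _ _ 0 (coF q n p) (3*q+12) (3*q+10) (2*q+9) (q+2) 1 0 x using 1
  simp only [A2]; push_cast; ring

private lemma hasDerivAtA2 (q : ℕ) (n p : ℝ) (x : ℝ) :
    HasDerivAt (A2 q n p) (A3 q n p x) x := by
  have hfun : A2 q n p = (fun k : ℝ => (coA q n p * (3*(q:ℝ)+14) * (3*(q:ℝ)+13)) * k^(3*q+11+1)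
      + (coB q n p * (3*(q:ℝ)+12) * (3*(q:ℝ)+11)) * k^(3*q+9+1)
      + (coC q n p * (2*(q:ℝ)+11) * (2*(q:ℝ)+10)) * k^(2*q+8+1)
      + (coD q n p * ((q:ℝ)+4) * ((q:ℝ)+3)) * k^(q+1+1)
      + (coE q n p * 6) * k^(0+1) + 0 * k^(0+1) + 0) := by
    funext k; simp only [A2]; ring
  rw [hfun]
  convert hasDerivAt7 _ _ _ _ _ 0 0 (3*q+11) (3*q+9) (2*q+8) (q+1) 0 0 x using 1
  simp only [A3]; push_cast; ring

private lemma pos_on (g g' : ℝ → ℝ) (hd : ∀ x, HasDerivAt g (g' x) x) (h0 : g 1 = 0)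
    {b : ℝ} (hb : 1 < b) (hpos : ∀ x ∈ Set.Ioo (1:ℝ) b, 0 < g' x) :
    ∀ x ∈ Set.Ioo (1:ℝ) b, 0 < g x := by
  have hmono : StrictMonoOn g (Set.Icc 1 b) := by
    apply strictMonoOn_of_deriv_pos (convex_Icc 1 b)
    · exact fun x _ => (hd x).differentiableAt.continuousAt.continuousWithinAt
    · intro x hx
      rw [interior_Icc] at hx
      rw [(hd x).deriv]; exact hpos x hx
  intro x hx
  have := hmono (Set.left_mem_Icc.mpr hb.le) (Set.mem_Icc.mpr ⟨hx.1.le, hx.2.le⟩) hx.1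
  rwa [h0] at this

/-- Boundary-matching polynomial for `m > 3`: `α` vanishes to third order at `k = 1`,
has positive third derivative there, tends to `-∞`, hence has a first zero `k̃ > 1`
with `α > 0` on `(1, k̃)`. -/
theorem stmt_14 (m : ℕ) (hm : 3 < m) (n p : ℝ) (hn : 0 < n) (hp : 0 < p)
    (α : ℝ → ℝ)
    (hα : α = fun k =>
        -4 * (m : ℝ) * ((m : ℝ) - 3) * (n + p) * k ^ (3 * m + 2)
        + 4 * ((m : ℝ) + 1) * (((m : ℝ) - 1) * p + 2 * m * n) * k ^ (3 * m)
        - 4 * (3 * (m : ℝ) - 1) * ((m : ℝ) * n + p) * k ^ (2 * m + 3)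
        + 4 * (3 * (m : ℝ) - 1) * ((m : ℝ) * n - p) * k ^ m
        + 4 * ((m : ℝ) + 1) * (((m : ℝ) - 1) * p - 2 * m * n) * k ^ 3
        - 4 * (m : ℝ) * ((m : ℝ) - 3) * (p - n) * k) :
    α 1 = 0 ∧ deriv α 1 = 0 ∧ deriv (deriv α) 1 = 0 ∧
    deriv (deriv (deriv α)) 1
      = 8 * m * n * (3 * (m : ℝ) - 1) * ((m : ℝ) - 3) * ((m : ℝ) - 1) * ((m : ℝ) + 1) ∧
    0 < 8 * (m : ℝ) * n * (3 * (m : ℝ) - 1) * ((m : ℝ) - 3) * ((m : ℝ) - 1) * ((m : ℝ) + 1) ∧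
    Filter.Tendsto α Filter.atTop Filter.atBot ∧
    ∃ ktilde : ℝ, 1 < ktilde ∧ (∀ k : ℝ, 1 < k → k < ktilde → 0 < α k) ∧
      α ktilde = 0 := by
  obtain ⟨q, rfl⟩ : ∃ q, m = q + 4 := ⟨m - 4, by omega⟩
  have hq0 : (0:ℝ) ≤ (q:ℝ) := q.cast_nonneg
  -- α equals A0
  have hA0 : α = A0 q n p := by
    rw [hα]; funext k
    simp only [A0, coA, coB, coC, coD, coE, coF]
    push_cast; ring
  have H1 : ∀ x, HasDerivAt α (A1 q n p x) x := by
    rw [hA0]; exact hasDerivAtA0 q n p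
  have hd1 : deriv α = A1 q n p := funext fun x => (H1 x).deriv
  have hd2 : deriv (A1 q n p) = A2 q n p := funext fun x => (hasDerivAtA1 q n p x).deriv
  have hd3 : deriv (A2 q n p) = A3 q n p := funext fun x => (hasDerivAtA2 q n p x).deriv
  -- values at 1
  have hv0 : α 1 = 0 := by
    rw [hA0]; simp only [A0, coA, coB, coC, coD, coE, coF, one_pow]; ring
  have hv1 : A1 q n p 1 = 0 := by
    simp only [A1, coA, coB, coC, coD, coE, coF, one_pow]; ring
  have hv2 : A2 q n p 1 = 0 := by
    simp only [A2, coA, coB, coC, coD, coE, coF, one_pow]; ring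
  have hv3 : A3 q n p 1
      = 8 * ((q:ℝ)+4) * n * (3 * ((q:ℝ)+4) - 1) * (((q:ℝ)+4) - 3) * (((q:ℝ)+4) - 1)
        * (((q:ℝ)+4) + 1) := by
    simp only [A3, coA, coB, coC, coD, coE, coF, one_pow]; ring
  have hcpos : (0:ℝ) < 8 * ((q:ℝ)+4) * n * (3 * ((q:ℝ)+4) - 1) * (((q:ℝ)+4) - 3) * (((q:ℝ)+4) - 1)
        * (((q:ℝ)+4) + 1) := by
    have f1 : (0:ℝ) < 8*((q:ℝ)+4) := by linarith
    have f2 : (0:ℝ) < 3*((q:ℝ)+4)-1 := by linarith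
    have f3 : (0:ℝ) < ((q:ℝ)+4)-3 := by linarith
    have f4 : (0:ℝ) < ((q:ℝ)+4)-1 := by linarith
    have f5 : (0:ℝ) < ((q:ℝ)+4)+1 := by linarith
    exact mul_pos (mul_pos (mul_pos (mul_pos (mul_pos f1 hn) f2) f3) f4) f5
  -- Tendsto atBot
  have htend : Tendsto α atTop atBot := by
    set a2 : ℝ := 4*((q:ℝ)+4)*((q:ℝ)+1)*(n+p) with ha2def
    have ha2 : 0 < a2 := by
      have : (0:ℝ) < ((q:ℝ)+4)*((q:ℝ)+1) := by nlinarith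
      have := mul_pos this (by linarith : (0:ℝ) < n + p)
      nlinarith [this]
    set Bc : ℝ := |coB q n p| + |coC q n p| + |coD q n p| + |coE q n p| + |coF q n p| with hBc
    have hle : ∀ k : ℝ, 1 ≤ k → α k ≤ (Bc - a2*k^2) * k^(3*q+12) := by
      intro k hk1
      have hk0 : (0:ℝ) < k := lt_of_lt_of_le one_pos hk1
      have hval : α k = -(a2*(k^2*k^(3*q+12))) + coB q n p * k^(3*q+12)
          + coC q n p * k^(2*q+11) + coD q n p * k^(q+4) + coE q n p * k^3
          + coF q n p * k := by
        rw [hA0]; simp only [A0, coA, coB, coC, coD, coE, coF]; ring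
      have pw : ∀ i : ℕ, i ≤ 3*q+12 → k^i ≤ k^(3*q+12) := fun i hi =>
        pow_le_pow_right₀ hk1 hi
      have pnn : ∀ i : ℕ, (0:ℝ) ≤ k^i := fun i => pow_nonneg hk0.le i
      have tB : coB q n p * k^(3*q+12) ≤ |coB q n p| * k^(3*q+12) :=
        mul_le_mul_of_nonneg_right (le_abs_self _) (pnn _)
      have tC : coC q n p * k^(2*q+11) ≤ |coC q n p| * k^(3*q+12) :=
        le_trans (mul_le_mul_of_nonneg_right (le_abs_self _) (pnn _))
          (mul_le_mul_of_nonneg_left (pw _ (by omega)) (abs_nonneg _))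
      have tD : coD q n p * k^(q+4) ≤ |coD q n p| * k^(3*q+12) :=
        le_trans (mul_le_mul_of_nonneg_right (le_abs_self _) (pnn _))
          (mul_le_mul_of_nonneg_left (pw _ (by omega)) (abs_nonneg _))
      have tE : coE q n p * k^3 ≤ |coE q n p| * k^(3*q+12) :=
        le_trans (mul_le_mul_of_nonneg_right (le_abs_self _) (pnn _))
          (mul_le_mul_of_nonneg_left (pw _ (by omega)) (abs_nonneg _))
      have tF : coF q n p * k ≤ |coF q n p| * k^(3*q+12) := by
        have : coF q n p * k ≤ |coF q n p| * k^1 := by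
          simpa using mul_le_mul_of_nonneg_right (le_abs_self _) hk0.le
        exact le_trans this (mul_le_mul_of_nonneg_left (pw _ (by omega)) (abs_nonneg _))
      have hexp : (Bc - a2*k^2) * k^(3*q+12)
          = -(a2*(k^2*k^(3*q+12))) + Bc * k^(3*q+12) := by ring
      rw [hval, hexp, hBc]
      have : (|coB q n p| + |coC q n p| + |coD q n p| + |coE q n p| + |coF q n p|) * k^(3*q+12)
          = |coB q n p| * k^(3*q+12) + |coC q n p| * k^(3*q+12) + |coD q n p| * k^(3*q+12)
            + |coE q n p| * k^(3*q+12) + |coF q n p| * k^(3*q+12) := by ring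
      rw [this]
      linarith
    have t1 : Tendsto (fun k : ℝ => Bc - a2*k^2) atTop atBot := by
      have h2 : Tendsto (fun k : ℝ => a2*k^2) atTop atTop :=
        (tendsto_pow_atTop (two_ne_zero)).const_mul_atTop ha2
      have h3 : Tendsto (fun k : ℝ => -(a2*k^2)) atTop atBot := tendsto_neg_atBot_iff.mpr h2
      simpa [sub_eq_add_neg] using tendsto_atBot_add_const_left atTop Bc h3
    have t2 : Tendsto (fun k : ℝ => k^(3*q+12)) atTop atTop :=
      tendsto_pow_atTop (by omega)
    have t3 : Tendsto (fun k : ℝ => (Bc - a2*k^2) * k^(3*q+12)) atTop atBot :=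
      t1.atBot_mul_atTop₀ t2
    refine tendsto_atBot_mono' atTop ?_ t3
    filter_upwards [eventually_ge_atTop (1:ℝ)] with k hk using hle k hk
  -- eventual positivity of A3 near 1
  have hcont3 : Continuous (A3 q n p) := by
    unfold A3; fun_prop
  have hev : ∀ᶠ x in 𝓝 (1:ℝ), 0 < A3 q n p x := by
    have : Tendsto (A3 q n p) (𝓝 1) (𝓝 (A3 q n p 1)) := hcont3.continuousAt
    exact this.eventually (eventually_gt_nhds (show (0:ℝ) < A3 q n p 1 by rw [hv3]; exact hcpos))
  obtain ⟨δ, hδ, hball⟩ := Metric.eventually_nhds_iff.mp hev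
  set b : ℝ := 1 + δ/2 with hbdef
  have hb : (1:ℝ) < b := by rw [hbdef]; linarith
  have h3pos : ∀ x ∈ Set.Ioo (1:ℝ) b, 0 < A3 q n p x := by
    intro x hx
    apply hball
    have hx1 : 1 < x := hx.1
    have hx2 : x < 1 + δ/2 := by rw [← hbdef]; exact hx.2
    rw [Real.dist_eq, abs_lt]
    constructor <;> linarith
  have h2pos := pos_on (A2 q n p) (A3 q n p) (hasDerivAtA2 q n p) hv2 hb h3pos
  have h1pos := pos_on (A1 q n p) (A2 q n p) (hasDerivAtA1 q n p) hv1 hb h2pos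
  have h0pos : ∀ x ∈ Set.Ioo (1:ℝ) b, 0 < α x := by
    rw [hA0]
    exact pos_on (A0 q n p) (A1 q n p) (hasDerivAtA0 q n p) (by rw [← hA0]; exact hv0) hb h1pos
  -- construct ktilde
  have hcontα : Continuous α := by rw [hA0]; unfold A0; fun_prop
  set S : Set ℝ := {k | b ≤ k ∧ α k ≤ 0} with hSdef
  have hSne : S.Nonempty := by
    have h1 := htend.eventually (eventually_lt_atBot (0:ℝ))
    obtain ⟨K, hK1, hK2⟩ := (h1.and (eventually_ge_atTop b)).exists
    exact ⟨K, hK2, hK1.le⟩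
  have hSbdd : BddBelow S := ⟨b, fun x hx => hx.1⟩
  have hSclosed : IsClosed S := by
    have : S = Set.Ici b ∩ α ⁻¹' (Set.Iic 0) := by
      ext x; simp [hSdef, Set.mem_Ici, Set.mem_Iic, and_comm]
    rw [this]
    exact isClosed_Ici.inter (isClosed_Iic.preimage hcontα)
  set kt : ℝ := sInf S with hktdef
  have hktS : kt ∈ S := hSclosed.csInf_mem hSne hSbdd
  have hkt1 : 1 < kt := lt_of_lt_of_le hb hktS.1
  have hposIoo : ∀ k : ℝ, 1 < k → k < kt → 0 < α k := by
    intro k hk1 hkkt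
    by_cases hkb : k < b
    · exact h0pos k ⟨hk1, hkb⟩
    · have hknS : k ∉ S := notMem_of_lt_csInf hkkt hSbdd
      by_contra hle
      exact hknS ⟨le_of_not_gt hkb, le_of_not_gt hle⟩
  refine ⟨hv0, by rw [hd1]; exact hv1, by rw [hd1, hd2]; exact hv2,
    by rw [hd1, hd2, hd3]; rw [hv3]; push_cast; ring,
    by push_cast; convert hcpos using 2,
    htend, kt, hkt1, hposIoo, ?_⟩
  -- α kt = 0
  have hle0 : α kt ≤ 0 := hktS.2
  have hge0 : 0 ≤ α kt := by
    have hlim : Tendsto α (𝓝[<] kt) (𝓝 (α kt)) :=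
      (hcontα.continuousAt.tendsto).mono_left nhdsWithin_le_nhds
    have hevge : ∀ᶠ x in 𝓝[<] kt, 0 ≤ α x := by
      filter_upwards [Ioo_mem_nhdsLT_of_mem (Set.mem_Ioc.mpr ⟨hkt1, le_refl kt⟩)] with x hx
      exact (hposIoo x hx.1 hx.2).le
    exact ge_of_tendsto hlim hevge
  linarith
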